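/- Admissibility of contraction in ISC: If Γ,A,A,Δ ⊢ C is derivable in ISC, then Γ,A,Δ ⊢ C is derivable in ISC. -/

import Mathlib

/-- Types built from intersection and a set `K` of type constructors, each
`κ : K` having contravariant arity `c κ` and covariant arity `v κ`. -/
inductive GTy (K : Type) (c v : K → ℕ) : Type
  | inter : GTy K c v → GTy K c v → GTy K c v
  | cons : (κ : K) → (Fin (c κ) → GTy K c v) → (Fin (v κ) → GTy K c v) → GTy K c v

/-- The sequent-style subtyping system ISC, parameterized by the width
function `w` (valued in {0,1}). Sequents `Γ ⊢ A` with `Γ` a list of types. -/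
inductive ISC {K : Type} {c v : K → ℕ} (w : K → ℕ) : List (GTy K c v) → GTy K c v → Prop
  | wk {Γ Δ : List (GTy K c v)} {C : GTy K c v} (κ : K)
      (f : Fin (c κ) → GTy K c v) (g : Fin (v κ) → GTy K c v) :
      ISC w (Γ ++ Δ) C → ISC w (Γ ++ GTy.cons κ f g :: Δ) C
  | interR {Γ : List (GTy K c v)} {A B : GTy K c v} :
      ISC w Γ A → ISC w Γ B → ISC w Γ (GTy.inter A B)
  | interL {Γ Δ : List (GTy K c v)} {A B C : GTy K c v} :
      ISC w (Γ ++ A :: B :: Δ) C → ISC w (Γ ++ GTy.inter A B :: Δ) C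
  | constr (κ : K) (k : ℕ) (hk : w κ ≤ k)
      (As : Fin (c κ) → Fin k → GTy K c v) (Bs : Fin (v κ) → Fin k → GTy K c v)
      (A : Fin (c κ) → GTy K c v) (B : Fin (v κ) → GTy K c v) :
      (∀ j i, ISC w [A j] (As j i)) →
      (∀ j, ISC w (List.ofFn (Bs j)) (B j)) →
      ISC w (List.ofFn fun i => GTy.cons κ (fun j => As j i) (fun j => Bs j i))
        (GTy.cons κ A B)

section Aux

variable {K : Type} {c v : K → ℕ}

/-- The list of atoms (constructor types) obtained by splitting intersections. -/
def GTy.atoms : GTy K c v → List (GTy K c v)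
  | .inter A B => A.atoms ++ B.atoms
  | .cons κ f g => [.cons κ f g]

/-- Atoms of a context. -/
def atomsL (Γ : List (GTy K c v)) : List (GTy K c v) := Γ.flatMap GTy.atoms

@[simp] lemma atomsL_nil : atomsL ([] : List (GTy K c v)) = [] := rfl

@[simp] lemma atomsL_cons (A : GTy K c v) (Γ : List (GTy K c v)) :
    atomsL (A :: Γ) = GTy.atoms A ++ atomsL Γ := rfl

@[simp] lemma atomsL_append (Γ Δ : List (GTy K c v)) :
    atomsL (Γ ++ Δ) = atomsL Γ ++ atomsL Δ := by
  induction Γ with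
  | nil => rfl
  | cons X Γ ih => simp [ih]

lemma mem_atomsL {x : GTy K c v} {Γ : List (GTy K c v)} :
    x ∈ atomsL Γ ↔ ∃ y ∈ Γ, x ∈ GTy.atoms y := List.mem_flatMap

lemma atoms_shape : ∀ (A : GTy K c v), ∀ x ∈ A.atoms, ∃ κ f g, x = GTy.cons κ f g
  | .inter A B, x, hx => by
      rcases List.mem_append.1 hx with h | h
      · exact atoms_shape A x h
      · exact atoms_shape B x h
  | .cons κ f g, x, hx => ⟨κ, f, g, by simpa [GTy.atoms] using hx⟩

/-- Atomized derivability: derivability of `C` from the *set* of atoms of the context. -/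
inductive Sem (w : K → ℕ) : List (GTy K c v) → GTy K c v → Prop
  | inter {S : List (GTy K c v)} {A B : GTy K c v} :
      Sem w S A → Sem w S B → Sem w S (GTy.inter A B)
  | cons {S : List (GTy K c v)} (κ : K) (k : ℕ) (hk : w κ ≤ k)
      (As : Fin (c κ) → Fin k → GTy K c v) (Bs : Fin (v κ) → Fin k → GTy K c v)
      (A : Fin (c κ) → GTy K c v) (B : Fin (v κ) → GTy K c v)
      (hmem : ∀ i, GTy.cons κ (fun j => As j i) (fun j => Bs j i) ∈ S)
      (hA : ∀ j i, Sem w (GTy.atoms (A j)) (As j i))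
      (hB : ∀ j, Sem w (atomsL (List.ofFn (Bs j))) (B j)) :
      Sem w S (GTy.cons κ A B)

lemma Sem.mono {w : K → ℕ} {S S' : List (GTy K c v)} {C : GTy K c v}
    (h : Sem w S C) (hs : ∀ x ∈ S, x ∈ S') : Sem w S' C := by
  induction h generalizing S' with
  | inter _ _ ihA ihB => exact .inter (ihA hs) (ihB hs)
  | cons κ k hk As Bs A B hmem hA hB ihA ihB =>
      exact .cons κ k hk As Bs A B (fun i => hs _ (hmem i)) hA hB

lemma ISC.weak_any {w : K → ℕ} (X : GTy K c v) :
    ∀ {Γ Δ : List (GTy K c v)} {C : GTy K c v},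
      ISC w (Γ ++ Δ) C → ISC w (Γ ++ X :: Δ) C := by
  induction X with
  | cons κ f g => intro Γ Δ C h; exact ISC.wk κ f g h
  | inter A B ihA ihB =>
      intro Γ Δ C h
      exact ISC.interL (ihA (Δ := B :: Δ) (ihB h))

lemma ISC.interL_atoms {w : K → ℕ} (X : GTy K c v) :
    ∀ {Γ Δ : List (GTy K c v)} {C : GTy K c v},
      ISC w (Γ ++ GTy.atoms X ++ Δ) C → ISC w (Γ ++ X :: Δ) C := by
  induction X with
  | cons κ f g => intro Γ Δ C h; simpa [GTy.atoms] using h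
  | inter A B ihA ihB =>
      intro Γ Δ C h
      apply ISC.interL
      have h1 : ISC w (Γ ++ GTy.atoms A ++ (GTy.atoms B ++ Δ)) C := by
        simpa [GTy.atoms, List.append_assoc] using h
      have h2 := ihA h1
      have h3 : ISC w ((Γ ++ [A]) ++ GTy.atoms B ++ Δ) C := by
        simpa [List.append_assoc] using h2
      have h4 := ihB h3
      simpa [List.append_assoc] using h4

lemma ISC.of_atomsL {w : K → ℕ} :
    ∀ (Γ : List (GTy K c v)) {Δ : List (GTy K c v)} {C : GTy K c v},
      ISC w (Δ ++ atomsL Γ) C → ISC w (Δ ++ Γ) C := by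
  intro Γ
  induction Γ with
  | nil => intro Δ C h; simpa using h
  | cons X Γ' ih =>
      intro Δ C h
      have h1 : ISC w (Δ ++ GTy.atoms X ++ atomsL Γ') C := by
        simpa [List.append_assoc] using h
      have h2 := ISC.interL_atoms X (Γ := Δ) (Δ := atomsL Γ') h1
      have h3 : ISC w ((Δ ++ [X]) ++ atomsL Γ') C := by
        simpa [List.append_assoc] using h2
      have h4 := ih (Δ := Δ ++ [X]) h3
      simpa [List.append_assoc] using h4

lemma ISC.sublist_weak {w : K → ℕ} {L' L : List (GTy K c v)} (hs : L'.Sublist L) :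
    (∀ x ∈ L, ∃ κ f g, x = GTy.cons κ f g) →
    ∀ (Δ : List (GTy K c v)) {C : GTy K c v}, ISC w (Δ ++ L') C → ISC w (Δ ++ L) C := by
  induction hs with
  | slnil => intro _ Δ C h; exact h
  | cons a hs ih =>
      intro hcons Δ C h
      obtain ⟨κ, f, g, rfl⟩ := hcons a List.mem_cons_self
      exact ISC.wk κ f g (ih (fun x hx => hcons x (List.mem_cons_of_mem _ hx)) Δ h)
  | cons_cons a hs ih =>
      intro hcons Δ C h
      have h2 := ih (fun x hx => hcons x (List.mem_cons_of_mem _ hx)) (Δ ++ [a])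
        (by simpa [List.append_assoc] using h)
      simpa [List.append_assoc] using h2

lemma sem_of_isc {w : K → ℕ} {Γ : List (GTy K c v)} {C : GTy K c v}
    (h : ISC w Γ C) : Sem w (atomsL Γ) C := by
  induction h with
  | wk κ f g h ih =>
      refine ih.mono ?_
      intro x hx
      simp only [atomsL_append, atomsL_cons, List.mem_append] at hx ⊢
      tauto
  | interR hA hB ihA ihB => exact .inter ihA ihB
  | interL h ih =>
      refine ih.mono ?_
      intro x hx
      simp only [atomsL_append, atomsL_cons, GTy.atoms, List.mem_append] at hx ⊢
      tauto
  | constr κ k hk As Bs A B hA hB ihA ihB =>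
      refine Sem.cons κ k hk As Bs A B ?_ ?_ ?_
      · intro i
        rw [mem_atomsL]
        exact ⟨_, by simp [List.mem_ofFn]; exact ⟨i, rfl⟩, by simp [GTy.atoms]⟩
      · intro j i
        refine (ihA j i).mono ?_
        intro x hx; simpa using hx
      · exact ihB

lemma isc_of_sem {w : K → ℕ} (hw : ∀ κ, w κ ≤ 1) {S : List (GTy K c v)} {C : GTy K c v}
    (h : Sem w S C) : ∀ (Γ : List (GTy K c v)), (∀ x ∈ S, x ∈ atomsL Γ) → ISC w Γ C := by
  induction h with
  | inter hA hB ihA ihB => intro Γ hmem; exact ISC.interR (ihA Γ hmem) (ihB Γ hmem)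
  | @cons S κ k hk As Bs A B hmem hA hB ihA ihB =>
      intro Γ hsub
      classical
      set L : List (GTy K c v) := atomsL Γ with hLdef
      set p : GTy K c v → Prop :=
        fun x => ∃ i, x = GTy.cons κ (fun j => As j i) (fun j => Bs j i) with hp
      set L' : List (GTy K c v) := L.filter (fun x => decide (p x)) with hL'
      have hmemL' : ∀ q : Fin L'.length, p (L'.get q) := by
        intro q
        have h1 : L'.get q ∈ L' := L'.get_mem q
        have h2 := (List.mem_filter.1 h1).2
        simpa using h2
      choose ι hι using hmemL'
      have hin : ∀ i : Fin k, GTy.cons κ (fun j => As j i) (fun j => Bs j i) ∈ L' := by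
        intro i
        refine List.mem_filter.2 ⟨hsub _ (hmem i), ?_⟩
        simp only [hp, decide_eq_true_iff]
        exact ⟨i, rfl⟩
      have hsurj : ∀ i : Fin k, ∃ q : Fin L'.length,
          (∀ j, As j (ι q) = As j i) ∧ (∀ j, Bs j (ι q) = Bs j i) := by
        intro i
        obtain ⟨q, hq⟩ := List.get_of_mem (hin i)
        have heq : GTy.cons κ (fun j => As j (ι q)) (fun j => Bs j (ι q))
            = GTy.cons κ (fun j => As j i) (fun j => Bs j i) := (hι q).symm.trans hq
        have hAs : (fun j => As j (ι q)) = (fun j => As j i) := by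
          injection heq with _ h1 h2
        have hBs : (fun j => Bs j (ι q)) = (fun j => Bs j i) := by
          injection heq with _ h1 h2
        exact ⟨q, fun j => congrFun hAs j, fun j => congrFun hBs j⟩
      have hk' : w κ ≤ L'.length := by
        rcases Nat.eq_zero_or_pos k with h0 | h0
        · omega
        · have h1 := hin ⟨0, h0⟩
          have h2 : 0 < L'.length := List.length_pos_iff.2 (List.ne_nil_of_mem h1)
          exact le_trans (hw κ) h2
      have main : ISC w (List.ofFn (fun q : Fin L'.length =>
          GTy.cons κ (fun j => As j (ι q)) (fun j => Bs j (ι q)))) (GTy.cons κ A B) := by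
        refine ISC.constr κ L'.length hk'
          (fun j q => As j (ι q)) (fun j q => Bs j (ι q)) A B ?_ ?_
        · intro j q
          refine ihA j (ι q) [A j] ?_
          intro x hx; simpa using hx
        · intro j
          refine ihB j (List.ofFn fun q => Bs j (ι q)) ?_
          intro x hx
          rw [mem_atomsL] at hx ⊢
          obtain ⟨y, hy, hxy⟩ := hx
          rw [List.mem_ofFn] at hy
          obtain ⟨i, rfl⟩ := hy
          obtain ⟨q, _, hB'⟩ := hsurj i
          refine ⟨Bs j (ι q), ?_, by rw [hB' j]; exact hxy⟩
          rw [List.mem_ofFn]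
          exact ⟨q, rfl⟩
      have hofn : List.ofFn (fun q : Fin L'.length =>
          GTy.cons κ (fun j => As j (ι q)) (fun j => Bs j (ι q))) = L' := by
        conv_rhs => rw [← List.ofFn_get L']
        congr 1
        funext q
        exact (hι q).symm
      rw [hofn] at main
      have hshape : ∀ x ∈ L, ∃ κ' f g, x = GTy.cons κ' f g := by
        intro x hx
        rw [hLdef, mem_atomsL] at hx
        obtain ⟨y, _, hxy⟩ := hx
        exact atoms_shape y x hxy
      have hL : ISC w L (GTy.cons κ A B) := by
        have := ISC.sublist_weak (List.filter_sublist (l := L)) hshape [] main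
        simpa using this
      have := ISC.of_atomsL Γ (Δ := []) (by simpa using hL)
      simpa using this

end Aux

/-- Admissibility of contraction in ISC: if `Γ, A, A, Δ ⊢ C` then `Γ, A, Δ ⊢ C`. -/
theorem ISC.contraction {K : Type} {c v : K → ℕ} (w : K → ℕ) (hw : ∀ κ, w κ ≤ 1)
    {Γ Δ : List (GTy K c v)} {A C : GTy K c v}
    (h : ISC w (Γ ++ A :: A :: Δ) C) : ISC w (Γ ++ A :: Δ) C := by
  refine isc_of_sem hw (sem_of_isc h) (Γ ++ A :: Δ) ?_
  intro x hx
  simp only [atomsL_append, atomsL_cons, List.mem_append] at hx ⊢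
  tauto
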